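/- The language L = { w ∈ {a,b}* : |w|_a ≤ |w|_b ≤ 2·|w|_a } is not accepted by any RDFAwtl. -/

import Mathlib

/-- A nondeterministic finite automaton with translucent letters (NFAwtl). -/
structure NFAwtl (Q α : Type) where
  τ : Q → Set α
  I : Set Q
  F : Set Q
  δ : Q → α → Set Q
  tr : ∀ q a, a ∈ τ q → δ q a = ∅

namespace NFAwtl

variable {Q α : Type}

/-- One computation step of an NFAwtl: delete the leftmost non-translucent letter
and change state (the head returns to the left end). -/
def Step (A : NFAwtl Q α) : Q × List α → Q × List α → Prop := fun c c' =>
  ∃ u a v, c.2 = u ++ a :: v ∧ (∀ x ∈ u, x ∈ A.τ c.1) ∧ a ∉ A.τ c.1 ∧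
    c'.1 ∈ A.δ c.1 a ∧ c'.2 = u ++ v

/-- Acceptance: from some initial state, reach a configuration whose remaining
letters are all translucent for a final state. -/
def Accepts (A : NFAwtl Q α) (w : List α) : Prop :=
  ∃ q₀ ∈ A.I, ∃ q w', Relation.ReflTransGen A.Step (q₀, w) (q, w') ∧
    (∀ x ∈ w', x ∈ A.τ q) ∧ q ∈ A.F

def lang (A : NFAwtl Q α) : Set (List α) := { w | A.Accepts w }

/-- A DFAwtl: single initial state and at most one transition per state/letter. -/
def Deterministic (A : NFAwtl Q α) : Prop :=
  (∃ q₀, A.I = {q₀}) ∧ ∀ q a, (A.δ q a).Subsingleton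

end NFAwtl

/-- A repetitive NFAwtl (RNFAwtl): on the end-of-tape marker it may accept
(states in `Facc`) or change state via `δend` and continue. -/
structure RNFAwtl (Q α : Type) where
  τ : Q → Set α
  I : Set Q
  δ : Q → α → Set Q
  δend : Q → Set Q
  Facc : Set Q
  tr : ∀ q a, a ∈ τ q → δ q a = ∅
  accEnd : ∀ q, q ∈ Facc → δend q = ∅

namespace RNFAwtl

variable {Q α : Type}

/-- One computation step of an RNFAwtl: either delete the leftmost
non-translucent letter, or, when all remaining letters are translucent,
change state via a `◁`-transition and continue. -/
def Step (A : RNFAwtl Q α) : Q × List α → Q × List α → Prop := fun c c' =>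
  (∃ u a v, c.2 = u ++ a :: v ∧ (∀ x ∈ u, x ∈ A.τ c.1) ∧ a ∉ A.τ c.1 ∧
    c'.1 ∈ A.δ c.1 a ∧ c'.2 = u ++ v)
  ∨ ((∀ x ∈ c.2, x ∈ A.τ c.1) ∧ c'.1 ∈ A.δend c.1 ∧ c'.2 = c.2)

def Accepts (A : RNFAwtl Q α) (w : List α) : Prop :=
  ∃ q₀ ∈ A.I, ∃ q w', Relation.ReflTransGen A.Step (q₀, w) (q, w') ∧
    (∀ x ∈ w', x ∈ A.τ q) ∧ q ∈ A.Facc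

def lang (A : RNFAwtl Q α) : Set (List α) := { w | A.Accepts w }

/-- An RDFAwtl: single initial state and deterministic transitions. -/
def Deterministic (A : RNFAwtl Q α) : Prop :=
  (∃ q₀, A.I = {q₀}) ∧ (∀ q a, (A.δ q a).Subsingleton) ∧ ∀ q, (A.δend q).Subsingleton

end RNFAwtl

/-- A non-returning repetitive NFAwtl (nr-NFAwtl): the head continues from the
position of the last deleted letter; on the end-of-tape marker it may change
state and return the head to the left end. -/
structure NrNFAwtl (Q α : Type) where
  τ : Q → Set α
  I : Set Q
  δ : Q → α → Set Q
  δend : Q → Set Q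
  Facc : Set Q
  tr : ∀ q a, a ∈ τ q → δ q a = ∅
  accEnd : ∀ q, q ∈ Facc → δend q = ∅

namespace NrNFAwtl

variable {Q α : Type}

/-- Configurations are `(x, q, w)`: `x` is the already-skipped prefix, the head
is on the first letter of `w`. -/
def Step (A : NrNFAwtl Q α) :
    List α × Q × List α → List α × Q × List α → Prop := fun c c' =>
  (∃ u a v, c.2.2 = u ++ a :: v ∧ (∀ x ∈ u, x ∈ A.τ c.2.1) ∧ a ∉ A.τ c.2.1 ∧
    c'.2.1 ∈ A.δ c.2.1 a ∧ c'.1 = c.1 ++ u ∧ c'.2.2 = v)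
  ∨ ((∀ x ∈ c.2.2, x ∈ A.τ c.2.1) ∧ c'.2.1 ∈ A.δend c.2.1 ∧ c'.1 = [] ∧
    c'.2.2 = c.1 ++ c.2.2)

def Accepts (A : NrNFAwtl Q α) (w : List α) : Prop :=
  ∃ q₀ ∈ A.I, ∃ x q w', Relation.ReflTransGen A.Step ([], q₀, w) (x, q, w') ∧
    (∀ y ∈ w', y ∈ A.τ q) ∧ q ∈ A.Facc

def lang (A : NrNFAwtl Q α) : Set (List α) := { w | A.Accepts w }

def Deterministic (A : NrNFAwtl Q α) : Prop :=
  (∃ q₀, A.I = {q₀}) ∧ (∀ q a, (A.δ q a).Subsingleton) ∧ ∀ q, (A.δend q).Subsingleton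

end NrNFAwtl

/-- A non-repetitive non-returning NFAwtl (nr-nr-NFAwtl): non-returning, and it
must halt as soon as all remaining letters to the right are translucent. -/
structure NrnrNFAwtl (Q α : Type) where
  τ : Q → Set α
  I : Set Q
  F : Set Q
  δ : Q → α → Set Q
  tr : ∀ q a, a ∈ τ q → δ q a = ∅

namespace NrnrNFAwtl

variable {Q α : Type}

def Step (A : NrnrNFAwtl Q α) :
    List α × Q × List α → List α × Q × List α → Prop := fun c c' =>
  ∃ u a v, c.2.2 = u ++ a :: v ∧ (∀ x ∈ u, x ∈ A.τ c.2.1) ∧ a ∉ A.τ c.2.1 ∧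
    c'.2.1 ∈ A.δ c.2.1 a ∧ c'.1 = c.1 ++ u ∧ c'.2.2 = v

def Accepts (A : NrnrNFAwtl Q α) (w : List α) : Prop :=
  ∃ q₀ ∈ A.I, ∃ x q w', Relation.ReflTransGen A.Step ([], q₀, w) (x, q, w') ∧
    (∀ y ∈ w', y ∈ A.τ q) ∧ q ∈ A.F

def lang (A : NrnrNFAwtl Q α) : Set (List α) := { w | A.Accepts w }

def Deterministic (A : NrnrNFAwtl Q α) : Prop :=
  (∃ q₀, A.I = {q₀}) ∧ ∀ q a, (A.δ q a).Subsingleton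

end NrnrNFAwtl

/-- Language classes. -/
def NFAwtlLangs (α : Type) [Fintype α] : Set (Set (List α)) :=
  { L | ∃ (Q : Type) (_ : Fintype Q) (A : NFAwtl Q α), A.lang = L }

def DFAwtlLangs (α : Type) [Fintype α] : Set (Set (List α)) :=
  { L | ∃ (Q : Type) (_ : Fintype Q) (A : NFAwtl Q α), A.Deterministic ∧ A.lang = L }

def RNFAwtlLangs (α : Type) [Fintype α] : Set (Set (List α)) :=
  { L | ∃ (Q : Type) (_ : Fintype Q) (A : RNFAwtl Q α), A.lang = L }

def RDFAwtlLangs (α : Type) [Fintype α] : Set (Set (List α)) :=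
  { L | ∃ (Q : Type) (_ : Fintype Q) (A : RNFAwtl Q α), A.Deterministic ∧ A.lang = L }

def NrNFAwtlLangs (α : Type) [Fintype α] : Set (Set (List α)) :=
  { L | ∃ (Q : Type) (_ : Fintype Q) (A : NrNFAwtl Q α), A.lang = L }

def NrDFAwtlLangs (α : Type) [Fintype α] : Set (Set (List α)) :=
  { L | ∃ (Q : Type) (_ : Fintype Q) (A : NrNFAwtl Q α), A.Deterministic ∧ A.lang = L }

def NrnrNFAwtlLangs (α : Type) [Fintype α] : Set (Set (List α)) :=
  { L | ∃ (Q : Type) (_ : Fintype Q) (A : NrnrNFAwtl Q α), A.lang = L }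

def NrnrDFAwtlLangs (α : Type) [Fintype α] : Set (Set (List α)) :=
  { L | ∃ (Q : Type) (_ : Fintype Q) (A : NrnrNFAwtl Q α), A.Deterministic ∧ A.lang = L }

/-- The two-letter alphabet {a, b}. -/
inductive AB : Type
  | a | b
deriving DecidableEq

instance : Fintype AB where
  elems := {AB.a, AB.b}
  complete := by intro x; cases x <;> simp

namespace BetweenRDFA

theorem arith_contra (c₁ c₂ d₁ d₂ : ℕ) (hc : c₁ ≤ c₂) (hd : d₁ ≤ d₂)
    (hne : ¬ (c₁ = c₂ ∧ d₁ = d₂))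
    (H : ∀ x y : ℕ, (x + c₂ ≤ y + d₂ ∧ y + d₂ ≤ 2*(x+c₂)) ↔
      (x + c₁ ≤ y + d₁ ∧ y + d₁ ≤ 2*(x+c₁))) : False := by
  set A := c₂ - c₁ with hA
  set B := d₂ - d₁ with hB
  have hc2 : c₂ = c₁ + A := by omega
  have hd2 : d₂ = d₁ + B := by omega
  have hAB : 0 < A + B := by omega
  have Hk : ∀ k x y, (x + c₁ + A*k ≤ y + d₁ + B*k ∧ y + d₁ + B*k ≤ 2*(x + c₁ + A*k)) ↔
      (x + c₁ ≤ y + d₁ ∧ y + d₁ ≤ 2*(x + c₁)) := by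
    intro k
    induction k with
    | zero => intro x y; simp
    | succ k ih =>
      intro x y
      have h1 := H (x + A*k) (y + B*k)
      have e1 : x + A*k + c₂ = x + c₁ + A*(k+1) := by
        rw [Nat.mul_succ]; omega
      have e2 : y + B*k + d₂ = y + d₁ + B*(k+1) := by
        rw [Nat.mul_succ]; omega
      have e3 : x + A*k + c₁ = x + c₁ + A*k := by omega
      have e4 : y + B*k + d₁ = y + d₁ + B*k := by omega
      rw [e1, e2, e3, e4] at h1
      exact h1.trans (ih x y)
  rcases lt_trichotomy B (2*A) with hB2 | hB2 | hB2
  · rcases le_or_gt A B with hAB2 | hAB2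
    · have := (Hk 1 (d₁ + 5) (2*c₁ + d₁ + 11)).mp
      simp only [Nat.mul_one] at this
      omega
    · have := (Hk 1 (d₁ + 5) (c₁ + 5)).mpr
      simp only [Nat.mul_one] at this
      omega
  · have hA1 : 1 ≤ A := by omega
    set k := c₁ + d₁ + 5 with hk
    have := (Hk k (d₁ + 5) (c₁ + 4)).mp
    have h1 : 1 ≤ A * k := Nat.one_le_iff_ne_zero.mpr (by positivity)
    have h2 : B * k = 2 * (A * k) := by rw [hB2]; ring
    omega
  · set k := c₁ + d₁ + 6 with hk
    have := (Hk k (d₁ + 5) (c₁ + 5)).mpr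
    have h2 : (2*A+1) * k ≤ B * k := Nat.mul_le_mul_right k (by omega)
    have h3 : (2*A+1) * k = 2*(A*k) + k := by ring
    omega

/-- The word a^x b^y. -/
def w2 (x y : ℕ) : List AB := List.replicate x AB.a ++ List.replicate y AB.b

lemma w2_count_a (x y : ℕ) : (w2 x y).count AB.a = x := by
  simp [w2, List.count_append, List.count_replicate]

lemma w2_count_b (x y : ℕ) : (w2 x y).count AB.b = y := by
  simp [w2, List.count_append, List.count_replicate]

lemma mem_w2 {z : AB} {x y : ℕ} (_ : z ∈ w2 x y) : z = AB.a ∨ z = AB.b := by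
  cases z <;> simp

lemma a_mem_w2 (x y : ℕ) : AB.a ∈ w2 (x+1) y := by
  simp [w2]

lemma b_mem_w2 (x y : ℕ) : AB.b ∈ w2 x (y+1) := by
  simp [w2]

lemma w2_succ_a (x y : ℕ) : w2 (x+1) y = AB.a :: w2 x y := by
  simp [w2, List.replicate_succ]

lemma w2_succ_b (x y : ℕ) :
    w2 x (y+1) = List.replicate x AB.a ++ AB.b :: List.replicate y AB.b := by
  simp [w2, List.replicate_succ]

lemma split_unique {α : Type} {p : α → Prop} :
    ∀ {u u' : List α} {a a' : α} {v v' : List α}, u ++ a :: v = u' ++ a' :: v' →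
      (∀ x ∈ u, p x) → (∀ x ∈ u', p x) → ¬ p a → ¬ p a' →
      u = u' ∧ a = a' ∧ v = v' := by
  intro u
  induction u with
  | nil =>
    intro u' a a' v v' h hu hu' ha ha'
    cases u' with
    | nil => simp_all
    | cons z u'' =>
      simp only [List.nil_append, List.cons_append, List.cons.injEq] at h
      exact absurd (h.1 ▸ hu' z (by simp)) ha
  | cons z u ih =>
    intro u' a a' v v' h hu hu' ha ha'
    cases u' with
    | nil =>
      simp only [List.nil_append, List.cons_append, List.cons.injEq] at h
      exact absurd (h.1 ▸ hu z (by simp)) ha'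
    | cons z' u'' =>
      simp only [List.cons_append, List.cons.injEq] at h
      obtain ⟨rfl, h2⟩ := h
      obtain ⟨h3, h4, h5⟩ := ih h2 (fun x hx => hu x (by simp [hx]))
        (fun x hx => hu' x (by simp [hx])) ha ha'
      exact ⟨by rw [h3], h4, h5⟩

variable {Q : Type}

lemma step_det (A : RNFAwtl Q AB) (hδ : ∀ q a, (A.δ q a).Subsingleton)
    (hδe : ∀ q, (A.δend q).Subsingleton) {c d d' : Q × List AB}
    (h1 : A.Step c d) (h2 : A.Step c d') : d = d' := by
  rcases h1 with ⟨u, a, v, he, hu, ha, hq, hw⟩ | ⟨ht, hq, hw⟩ <;>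
    rcases h2 with ⟨u', a', v', he', hu', ha', hq', hw'⟩ | ⟨ht', hq', hw'⟩
  · obtain ⟨rfl, rfl, rfl⟩ := split_unique (he.symm.trans he') hu hu' ha ha'
    have h1 : d.1 = d'.1 := hδ c.1 a hq hq'
    have h2 : d.2 = d'.2 := hw.trans hw'.symm
    exact Prod.ext h1 h2
  · exact absurd (ht' a (he ▸ by simp)) ha
  · exact absurd (ht a' (he' ▸ by simp)) ha'
  · exact Prod.ext (hδe c.1 hq hq') (hw.trans hw'.symm)

/-- A configuration is accepting. -/
def IsAcc (A : RNFAwtl Q AB) (c : Q × List AB) : Prop :=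
  (∀ x ∈ c.2, x ∈ A.τ c.1) ∧ c.1 ∈ A.Facc

lemma acc_stuck (A : RNFAwtl Q AB) {c d : Q × List AB} (h : IsAcc A c) :
    ¬ A.Step c d := by
  rintro (⟨u, a, v, he, hu, ha, hq, hw⟩ | ⟨ht, hq, hw⟩)
  · exact ha (h.1 a (he ▸ by simp))
  · rw [A.accEnd _ h.2] at hq
    exact hq

/-- Acceptance from a configuration. -/
def AccFrom (A : RNFAwtl Q AB) (c : Q × List AB) : Prop :=
  ∃ e, Relation.ReflTransGen A.Step c e ∧ IsAcc A e

lemma reach_total (A : RNFAwtl Q AB) (hδ : ∀ q a, (A.δ q a).Subsingleton)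
    (hδe : ∀ q, (A.δend q).Subsingleton) {c d : Q × List AB}
    (h1 : Relation.ReflTransGen A.Step c d) :
    ∀ {e}, Relation.ReflTransGen A.Step c e →
      Relation.ReflTransGen A.Step d e ∨ Relation.ReflTransGen A.Step e d := by
  induction h1 using Relation.ReflTransGen.head_induction_on with
  | refl => intro e h2; exact Or.inl h2
  | @head a c' hstep htail ih =>
    intro e h2
    rcases Relation.ReflTransGen.cases_head h2 with rfl | ⟨e₁, hs, hr⟩
    · exact Or.inr (htail.head hstep)
    · obtain rfl := step_det A hδ hδe hstep hs
      exact ih hr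

lemma accFrom_step (A : RNFAwtl Q AB) (hδ : ∀ q a, (A.δ q a).Subsingleton)
    (hδe : ∀ q, (A.δend q).Subsingleton) {c c' : Q × List AB}
    (h : A.Step c c') : AccFrom A c ↔ AccFrom A c' := by
  constructor
  · rintro ⟨e, hr, he⟩
    rcases reach_total A hδ hδe hr (Relation.ReflTransGen.single h) with h1 | h1
    · rcases Relation.ReflTransGen.cases_head h1 with rfl | ⟨f, hs, _⟩
      · exact ⟨e, Relation.ReflTransGen.refl, he⟩
      · exact absurd hs (acc_stuck A he)
    · exact ⟨e, h1, he⟩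
  · rintro ⟨e, hr, he⟩
    exact ⟨e, hr.head h, he⟩

lemma not_accFrom_stuck (A : RNFAwtl Q AB) {c : Q × List AB}
    (hstuck : ∀ d, ¬ A.Step c d) (hna : ¬ IsAcc A c) : ¬ AccFrom A c := by
  rintro ⟨e, hr, he⟩
  rcases Relation.ReflTransGen.cases_head hr with rfl | ⟨f, hs, _⟩
  · exact hna he
  · exact hstuck f hs

lemma not_accFrom_of_run (A : RNFAwtl Q AB) (hδ : ∀ q a, (A.δ q a).Subsingleton)
    (hδe : ∀ q, (A.δend q).Subsingleton) (f : ℕ → Q × List AB)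
    (hstep : ∀ k, A.Step (f k) (f (k+1))) (hna : ∀ k, ¬ IsAcc A (f k)) :
    ¬ AccFrom A (f 0) := by
  rintro ⟨e, hr, he⟩
  have key : ∀ c : Q × List AB, Relation.ReflTransGen A.Step c e →
      ∀ g : ℕ → Q × List AB, g 0 = c → (∀ k, A.Step (g k) (g (k+1))) →
      (∀ k, ¬ IsAcc A (g k)) → False := by
    intro c hr
    induction hr using Relation.ReflTransGen.head_induction_on with
    | refl =>
      intro g hg0 _ hgna
      exact hgna 0 (by rw [hg0]; exact he)
    | @head a b hstep' htail ih =>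
      intro g hg0 hgs hgna
      have h0 : A.Step a (g 1) := by rw [← hg0]; exact hgs 0
      have h1 : g 1 = b := step_det A hδ hδe h0 hstep'
      exact ih (fun k => g (k+1)) h1 (fun k => hgs (k+1)) (fun k => hgna (k+1))
  exact key _ hr f rfl hstep hna

open Classical in
/-- The move function of a deterministic RNFAwtl in the "region" where both
letters are present: returns the next state and how many a's and b's are
consumed, or `none` if the machine halts (accepting or rejecting). -/
noncomputable def move (A : RNFAwtl Q AB) (q : Q) : Option (Q × ℕ × ℕ) :=
  if h1 : AB.a ∈ A.τ q then
    if h2 : AB.b ∈ A.τ q then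
      if h3 : q ∈ A.Facc then none
      else if h4 : (A.δend q).Nonempty then some (h4.some, 0, 0) else none
    else if h5 : (A.δ q AB.b).Nonempty then some (h5.some, 0, 1) else none
  else if h6 : (A.δ q AB.a).Nonempty then some (h6.some, 1, 0) else none

lemma move_step (A : RNFAwtl Q AB) {q q' : Q} {da db : ℕ}
    (h : move A q = some (q', da, db)) (x y : ℕ) :
    A.Step (q, w2 (x + da) (y + db)) (q', w2 x y) ∧
      ¬ IsAcc A (q, w2 (x + da) (y + db)) := by
  unfold move at h
  split_ifs at h with h1 h2 h3 h4 h5 h6 <;>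
    simp only [Option.some.injEq, Prod.mk.injEq] at h
  · -- end move
    obtain ⟨rfl, hda, hdb⟩ := h
    subst hda; subst hdb
    constructor
    · refine Or.inr ⟨?_, h4.some_mem, by simp⟩
      intro z hz
      rcases mem_w2 hz with rfl | rfl
      · exact h1
      · exact h2
    · rintro ⟨_, hf⟩
      exact h3 hf
  · -- delete b
    obtain ⟨rfl, hda, hdb⟩ := h
    subst hda; subst hdb
    constructor
    · refine Or.inl ⟨List.replicate x AB.a, AB.b, List.replicate y AB.b, ?_, ?_, h2, h5.some_mem, rfl⟩
      · show w2 (x + 0) (y + 1) = _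
        rw [Nat.add_zero, w2_succ_b]
      · intro z hz
        rw [List.eq_of_mem_replicate hz]
        exact h1
    · rintro ⟨ht, _⟩
      exact h2 (ht AB.b (by rw [Nat.add_zero]; exact b_mem_w2 x y))
  · -- delete a
    obtain ⟨rfl, hda, hdb⟩ := h
    subst hda; subst hdb
    constructor
    · refine Or.inl ⟨[], AB.a, w2 x y, ?_, by simp, h1, h6.some_mem, by simp⟩
      show w2 (x + 1) (y + 0) = [] ++ AB.a :: w2 x y
      simp [w2_succ_a]
    · rintro ⟨ht, _⟩
      exact h1 (ht AB.a (by rw [Nat.add_zero]; exact a_mem_w2 x y))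

lemma move_none (A : RNFAwtl Q AB) {q : Q} (h : move A q = none) :
    (∀ x y, IsAcc A (q, w2 x y)) ∨ (∀ x y, ¬ AccFrom A (q, w2 (x+1) (y+1))) := by
  unfold move at h
  split_ifs at h with h1 h2 h3 h4 h5 h6
  · -- accepting: a,b translucent, q ∈ Facc
    left
    intro x y
    refine ⟨fun z hz => ?_, h3⟩
    rcases mem_w2 hz with rfl | rfl
    · exact h1
    · exact h2
  · -- a,b translucent, q ∉ Facc, δend empty: stuck
    right
    intro x y
    apply not_accFrom_stuck
    · rintro d (⟨u, a0, v, he, hu, ha0, hq, hw⟩ | ⟨ht, hq, hw⟩)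
      · rcases mem_w2 (show a0 ∈ w2 (x+1) (y+1) by rw [show w2 (x+1) (y+1) = u ++ a0 :: v from he]; simp) with rfl | rfl
        · exact ha0 h1
        · exact ha0 h2
      · exact h4 ⟨d.1, hq⟩
    · rintro ⟨_, hf⟩
      exact h3 hf
  · -- a translucent, b not, δ q b empty: stuck
    right
    intro x y
    apply not_accFrom_stuck
    · rintro d (⟨u, a0, v, he, hu, ha0, hq, hw⟩ | ⟨ht, hq, hw⟩)
      · rcases mem_w2 (show a0 ∈ w2 (x+1) (y+1) by rw [show w2 (x+1) (y+1) = u ++ a0 :: v from he]; simp) with rfl | rfl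
        · exact ha0 h1
        · exact h5 ⟨d.1, hq⟩
      · exact h2 (ht AB.b (b_mem_w2 (x+1) y))
    · rintro ⟨ht, _⟩
      exact h2 (ht AB.b (b_mem_w2 (x+1) y))
  · -- a not translucent, δ q a empty: stuck
    right
    intro x y
    apply not_accFrom_stuck
    · rintro d (⟨u, a0, v, he, hu, ha0, hq, hw⟩ | ⟨ht, hq, hw⟩)
      · rw [w2_succ_a] at he
        cases u with
        | nil =>
          simp only [List.nil_append, List.cons.injEq] at he
          rw [← he.1] at hq
          exact h6 ⟨d.1, hq⟩
        | cons z u' =>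
          simp only [List.cons_append, List.cons.injEq] at he
          exact h1 (he.1 ▸ hu z (by simp))
      · exact h1 (ht AB.a (a_mem_w2 x (y+1)))
    · rintro ⟨ht, _⟩
      exact h1 (ht AB.a (a_mem_w2 x (y+1)))

/-- The trajectory of the deterministic machine in the region, tracking the
state and the cumulative numbers of consumed a's and b's. -/
noncomputable def traj (A : RNFAwtl Q AB) (q₀ : Q) : ℕ → Option (Q × ℕ × ℕ)
  | 0 => some (q₀, 0, 0)
  | n+1 => (traj A q₀ n).bind fun p =>
      (move A p.1).map fun m => (m.1, p.2.1 + m.2.1, p.2.2 + m.2.2)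

lemma traj_acc (A : RNFAwtl Q AB) (hδ : ∀ q a, (A.δ q a).Subsingleton)
    (hδe : ∀ q, (A.δend q).Subsingleton) (q₀ : Q) :
    ∀ n q c d, traj A q₀ n = some (q, c, d) →
      ∀ x y, AccFrom A (q₀, w2 (x + c) (y + d)) ↔ AccFrom A (q, w2 x y) := by
  intro n
  induction n with
  | zero =>
    intro q c d h x y
    simp only [traj, Option.some.injEq, Prod.mk.injEq] at h
    obtain ⟨rfl, rfl, rfl⟩ := h
    simp
  | succ n ih =>
    intro q c d h x y
    rw [traj] at h
    cases htn : traj A q₀ n with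
    | none => rw [htn] at h; simp at h
    | some p =>
      rw [htn] at h
      simp only [Option.bind_some] at h
      cases hm : move A p.1 with
      | none => rw [hm] at h; simp at h
      | some m =>
        rw [hm] at h
        simp only [Option.map_some, Option.some.injEq, Prod.mk.injEq] at h
        obtain ⟨rfl, rfl, rfl⟩ := h
        obtain ⟨q', da, db⟩ := m
        have step := move_step A hm x y
        have e1 : x + (p.2.1 + da) = (x + da) + p.2.1 := by omega
        have e2 : y + (p.2.2 + db) = (y + db) + p.2.2 := by omega
        rw [e1, e2, ih p.1 p.2.1 p.2.2 (by rw [htn]) (x + da) (y + db)]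
        exact accFrom_step A hδ hδe step.1

lemma traj_mono (A : RNFAwtl Q AB) (q₀ : Q) (m : ℕ) :
    ∀ k {q1 c1 d1 q2 c2 d2}, traj A q₀ m = some (q1, c1, d1) →
      traj A q₀ (m + k) = some (q2, c2, d2) → c1 ≤ c2 ∧ d1 ≤ d2 := by
  intro k
  induction k with
  | zero =>
    intro q1 c1 d1 q2 c2 d2 h1 h2
    rw [Nat.add_zero, h1] at h2
    simp only [Option.some.injEq, Prod.mk.injEq] at h2
    omega
  | succ k ih =>
    intro q1 c1 d1 q2 c2 d2 h1 h2
    rw [show m + (k+1) = (m+k) + 1 from rfl, traj] at h2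
    cases htn : traj A q₀ (m+k) with
    | none => rw [htn] at h2; simp at h2
    | some p =>
      rw [htn] at h2
      simp only [Option.bind_some] at h2
      cases hm : move A p.1 with
      | none => rw [hm] at h2; simp at h2
      | some mm =>
        rw [hm] at h2
        simp only [Option.map_some, Option.some.injEq, Prod.mk.injEq] at h2
        obtain ⟨rfl, rfl, rfl⟩ := h2
        have h3 := ih (q2 := p.1) (c2 := p.2.1) (d2 := p.2.2) h1 (by rw [htn])
        omega

lemma traj_none_reason (A : RNFAwtl Q AB) (q₀ : Q) :
    ∀ n, traj A q₀ n = none →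
      ∃ k q c d, traj A q₀ k = some (q, c, d) ∧ move A q = none := by
  intro n
  induction n with
  | zero => intro h; simp [traj] at h
  | succ n ih =>
    intro h
    rw [traj] at h
    cases htn : traj A q₀ n with
    | none => exact ih htn
    | some p =>
      rw [htn] at h
      simp only [Option.bind_some] at h
      cases hm : move A p.1 with
      | none => exact ⟨n, p.1, p.2.1, p.2.2, by rw [htn], hm⟩
      | some mm => rw [hm] at h; simp at h

lemma traj_add (A : RNFAwtl Q AB) (q₀ : Q) (m : ℕ) :
    ∀ k, traj A q₀ (m + k) = (traj A q₀ m).bind fun p =>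
      (traj A p.1 k).map fun r => (r.1, p.2.1 + r.2.1, p.2.2 + r.2.2) := by
  intro k
  induction k with
  | zero =>
    cases htm : traj A q₀ m with
    | none => simp [htm]
    | some p => simp [htm, traj]
  | succ k ih =>
    rw [show m + (k+1) = (m+k) + 1 from rfl, traj, ih]
    cases htm : traj A q₀ m with
    | none => simp
    | some p =>
      simp only [Option.bind_some]
      rw [traj]
      cases htk : traj A p.1 k with
      | none => simp
      | some r =>
        simp only [Option.map_some, Option.bind_some]
        cases hm : move A r.1 with
        | none => simp
        | some mm =>
          simp only [Option.map_some, Option.bind_some, Option.some.injEq,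
            Prod.mk.injEq]
          exact ⟨trivial, by omega, by omega⟩

lemma traj_some_le (A : RNFAwtl Q AB) (q : Q) :
    ∀ j k r, traj A q (k + j) = some r → ∃ r', traj A q k = some r' := by
  intro j
  induction j with
  | zero => exact fun k r h => ⟨r, h⟩
  | succ j ih =>
    intro k r h
    rw [show k + (j+1) = (k+j) + 1 from rfl, traj] at h
    cases htn : traj A q (k+j) with
    | none => rw [htn] at h; simp at h
    | some p => exact ih k p htn

lemma cyc_not_acc (A : RNFAwtl Q AB) (hδ : ∀ q a, (A.δ q a).Subsingleton)
    (hδe : ∀ q, (A.δend q).Subsingleton) {q : Q} {p0 : ℕ} (hp0 : 0 < p0)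
    (hp : traj A q p0 = some (q, 0, 0)) (X Y : ℕ) :
    ¬ AccFrom A (q, w2 X Y) := by
  have hper : ∀ j, traj A q (p0 * j) = some (q, 0, 0) := by
    intro j
    induction j with
    | zero => rw [Nat.mul_zero]; rfl
    | succ j ih =>
      rw [Nat.mul_succ, traj_add A q (p0 * j) p0, ih]
      simp only [Option.bind_some]
      rw [hp]
      simp
  have hall : ∀ k, ∃ q', traj A q k = some (q', 0, 0) := by
    intro k
    have hk : k ≤ p0 * k := Nat.le_mul_of_pos_left k hp0
    have hj : traj A q (k + (p0 * k - k)) = some (q, 0, 0) := by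
      rw [show k + (p0 * k - k) = p0 * k from by omega]
      exact hper k
    obtain ⟨r, hr⟩ := traj_some_le A q (p0 * k - k) k _ hj
    obtain ⟨q', c', d'⟩ := r
    have hm := traj_mono A q k (p0 * k - k) hr hj
    obtain rfl : c' = 0 := by omega
    obtain rfl : d' = 0 := by omega
    exact ⟨q', hr⟩
  choose s hs using hall
  have hs0 : s 0 = q := by
    have h0 := hs 0
    rw [show traj A q 0 = some (q, 0, 0) from rfl] at h0
    simp only [Option.some.injEq, Prod.mk.injEq] at h0
    exact h0.1.symm
  have hmv : ∀ k, move A (s k) = some (s (k+1), 0, 0) := by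
    intro k
    have h2 := hs (k+1)
    rw [traj, hs k] at h2
    simp only [Option.bind_some] at h2
    cases hm : move A (s k) with
    | none => rw [hm] at h2; simp at h2
    | some mm =>
      rw [hm] at h2
      obtain ⟨m1, m2, m3⟩ := mm
      simp only [Option.map_some, Option.some.injEq, Prod.mk.injEq] at h2
      obtain ⟨e1, e2, e3⟩ := h2
      obtain rfl : m2 = 0 := by omega
      obtain rfl : m3 = 0 := by omega
      rw [e1]
  have hrun : ∀ k, A.Step (s k, w2 X Y) (s (k+1), w2 X Y) ∧
      ¬ IsAcc A (s k, w2 X Y) := by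
    intro k
    have := move_step A (hmv k) X Y
    simpa using this
  have hres := not_accFrom_of_run A hδ hδe (fun k => (s k, w2 X Y))
    (fun k => (hrun k).1) (fun k => (hrun k).2)
  simpa only [hs0] using hres

theorem main :
    { w : List AB | w.count AB.a ≤ w.count AB.b ∧ w.count AB.b ≤ 2 * w.count AB.a }
      ∉ RDFAwtlLangs AB := by
  rintro ⟨Q, fQ, A, ⟨⟨q₀, hI⟩, hδ, hδe⟩, hlang⟩
  have hacc : ∀ w, A.Accepts w ↔ AccFrom A (q₀, w) := by
    intro w
    constructor
    · rintro ⟨qi, hqi, qf, w', hr, ht, hf⟩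
      rw [hI, Set.mem_singleton_iff] at hqi
      subst hqi
      exact ⟨(qf, w'), hr, ht, hf⟩
    · rintro ⟨e, hr, ht, hf⟩
      exact ⟨q₀, by rw [hI]; exact rfl, e.1, e.2, hr, ht, hf⟩
  have G : ∀ u v, AccFrom A (q₀, w2 u v) ↔ (u ≤ v ∧ v ≤ 2*u) := by
    intro u v
    have h1 := Set.ext_iff.mp hlang (w2 u v)
    rw [← hacc]
    simpa [RNFAwtl.lang, w2_count_a, w2_count_b] using h1
  by_cases hex : ∃ n, traj A q₀ n = none
  · obtain ⟨n, hn⟩ := hex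
    obtain ⟨k, q, c, d, hk, hmvn⟩ := traj_none_reason A q₀ n hn
    have T := traj_acc A hδ hδe q₀ k q c d hk
    rcases move_none A hmvn with hL | hR
    · have h1 : AccFrom A (q₀, w2 (0 + c) (2*c + 1 + d)) :=
        (T 0 (2*c+1)).mpr ⟨(q, w2 0 (2*c+1)), Relation.ReflTransGen.refl, hL 0 (2*c+1)⟩
      have := (G (0 + c) (2*c + 1 + d)).mp h1
      omega
    · have h2 : AccFrom A (q₀, w2 (d + 1 + c) (c + 1 + d)) :=
        (G (d + 1 + c) (c + 1 + d)).mpr (by omega)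
      exact hR d c ((T (d+1) (c+1)).mp h2)
  · push_neg at hex
    have hsome : ∀ n, ∃ q c d, traj A q₀ n = some (q, c, d) := by
      intro n
      cases h : traj A q₀ n with
      | none => exact absurd h (hex n)
      | some p =>
        obtain ⟨pq, pc, pd⟩ := p
        exact ⟨pq, pc, pd, rfl⟩
    choose st cs ds hst using hsome
    have key : ∀ m n : ℕ, m < n → st m = st n → False := by
      intro m n hmn hq
      have hmono := traj_mono A q₀ m (n - m) (hst m)
        (by rw [show m + (n - m) = n from by omega]; exact hst n)
      by_cases hcd : cs m = cs n ∧ ds m = ds n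
      · obtain ⟨hc, hd⟩ := hcd
        have hadd := traj_add A q₀ m (n - m)
        rw [show m + (n - m) = n from by omega, hst n, hst m] at hadd
        simp only [Option.bind_some] at hadd
        cases htk : traj A (st m) (n - m) with
        | none => rw [htk] at hadd; simp at hadd
        | some r =>
          rw [htk] at hadd
          obtain ⟨r1, r2, r3⟩ := r
          simp only [Option.map_some, Option.some.injEq, Prod.mk.injEq] at hadd
          obtain ⟨e1, e2, e3⟩ := hadd
          obtain rfl : r2 = 0 := by omega
          obtain rfl : r3 = 0 := by omega
          have hr : traj A (st m) (n - m) = some (st m, 0, 0) := by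
            rw [htk, ← e1, ← hq]
          have hcyc := cyc_not_acc A hδ hδe (show 0 < n - m by omega) hr
            (ds m + 1) (cs m + 1)
          have T := traj_acc A hδ hδe q₀ m (st m) (cs m) (ds m) (hst m)
          exact hcyc ((T (ds m + 1) (cs m + 1)).mp ((G _ _).mpr (by omega)))
      · have T1 := traj_acc A hδ hδe q₀ m (st m) (cs m) (ds m) (hst m)
        have T2 := traj_acc A hδ hδe q₀ n (st n) (cs n) (ds n) (hst n)
        refine arith_contra (cs m) (cs n) (ds m) (ds n) hmono.1 hmono.2 hcd ?_
        intro x y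
        calc (x + cs n ≤ y + ds n ∧ y + ds n ≤ 2*(x + cs n))
            ↔ AccFrom A (q₀, w2 (x + cs n) (y + ds n)) := (G _ _).symm
          _ ↔ AccFrom A (st n, w2 x y) := T2 x y
          _ ↔ AccFrom A (st m, w2 x y) := by rw [hq]
          _ ↔ AccFrom A (q₀, w2 (x + cs m) (y + ds m)) := (T1 x y).symm
          _ ↔ (x + cs m ≤ y + ds m ∧ y + ds m ≤ 2*(x + cs m)) := G _ _
    obtain ⟨i, j, hij, hstij⟩ := Fintype.exists_ne_map_eq_of_card_lt
      (fun i : Fin (Fintype.card Q + 1) => st i)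
      (by simp)
    rcases lt_or_gt_of_ne hij with h | h
    · exact key i j h hstij
    · exact key j i h hstij.symm

end BetweenRDFA

/-- L = { w ∈ {a,b}* : |w|_a ≤ |w|_b ≤ 2·|w|_a } is not accepted
by any RDFAwtl. -/
theorem between_not_RDFAwtl :
    { w : List AB | w.count AB.a ≤ w.count AB.b ∧ w.count AB.b ≤ 2 * w.count AB.a }
      ∉ RDFAwtlLangs AB :=
  BetweenRDFA.main
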